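/- For the type A₂ polytopes P(m₁, m₂) = {(p₁,p₂,p₃) ∈ ℝ³_{≥0} : p₁ ≤ m₁, p₃ ≤ m₂, p₁+p₂+p₃ ≤ m₁+m₂}, the lattice points satisfy the Minkowski sum property: for all non-negative integers m₁, m₂, m₁', m₂', the set of lattice points of P(m₁+m₁', m₂+m₂') equals the Minkowski sum of the set of lattice points of P(m₁, m₂) and the set of lattice points of P(m₁', m₂'). -/
import Mathlib


open scoped Pointwise

/-- The set of lattice points of the type `A₂` Dyck-path polytope `P(m₁, m₂)`. -/
def latticeA2 (m₁ m₂ : ℕ) : Set (Fin 3 → ℤ) :=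
  {p | (∀ i, 0 ≤ p i) ∧ p 0 ≤ (m₁ : ℤ) ∧ p 2 ≤ (m₂ : ℤ) ∧
    p 0 + p 1 + p 2 ≤ (m₁ : ℤ) + (m₂ : ℤ)}

/-- for the type `A₂` polytopes, the lattice points satisfy the
Minkowski sum property: the lattice points of `P(m₁+m₁', m₂+m₂')` are exactly the
sums of a lattice point of `P(m₁, m₂)` and a lattice point of `P(m₁', m₂')`. -/
theorem stmt10 (m₁ m₂ m₁' m₂' : ℕ) :
    latticeA2 (m₁ + m₁') (m₂ + m₂') = latticeA2 m₁ m₂ + latticeA2 m₁' m₂' := by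
  ext p
  constructor
  · rintro ⟨hpos, h0, h2, hs⟩
    have hp0 := hpos 0
    have hp1 := hpos 1
    have hp2 := hpos 2
    set a0 : ℤ := min (p 0) m₁ with ha0
    set a2 : ℤ := min (p 2) m₂ with ha2
    set a1 : ℤ := min (p 1) ((m₁ : ℤ) + m₂ - a0 - a2) with ha1
    refine Set.mem_add.mpr ⟨![a0, a1, a2], ?_, ![p 0 - a0, p 1 - a1, p 2 - a2], ?_, ?_⟩
    · refine ⟨?_, ?_, ?_, ?_⟩
      · intro i
        fin_cases i <;> simp [ha0, ha1, ha2] <;> omega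
      · simp [ha0]
      · simp [ha2]
      · simp only [Matrix.cons_val_zero, Matrix.cons_val_one, Matrix.head_cons,
          Matrix.cons_val_two, Matrix.tail_cons]
        omega
    · push_cast at h0 h2 hs ⊢
      refine ⟨?_, ?_, ?_, ?_⟩
      · intro i
        fin_cases i <;> simp [ha0, ha1, ha2] <;> omega
      · simp [ha0]; omega
      · simp [ha2]; omega
      · simp only [Matrix.cons_val_zero, Matrix.cons_val_one, Matrix.head_cons,
          Matrix.cons_val_two, Matrix.tail_cons]
        omega
    · funext i
      fin_cases i <;> simp
  · rw [Set.mem_add]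
    rintro ⟨a, ⟨ha, ha0, ha2, has⟩, b, ⟨hb, hb0, hb2, hbs⟩, rfl⟩
    refine ⟨fun i => add_nonneg (ha i) (hb i), ?_, ?_, ?_⟩ <;>
      simp only [Pi.add_apply] <;> push_cast <;> omega
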